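/- Fix an integer N ≥ 2, a real p with 0 < p < 1, q = 1 − p, and a strategy S. If L : {0,…,N} → ℝ satisfies L(0) = 1, L(N) = 1, and L(i) = q·L(i − S(i)) + p·L(i + S(i)) for all 1 ≤ i ≤ N − 1, then L(i) = 1 for every 0 ≤ i ≤ N. -/

import Mathlib

lemma duration_pgf_aux
    (N : ℕ) (hN : 2 ≤ N) (p q : ℝ)
    (hp0 : 0 < p) (hp1 : p < 1) (hq : q = 1 - p)
    (S : ℕ → ℕ)
    (hS : ∀ i : ℕ, 1 ≤ i → i ≤ N - 1 → 1 ≤ S i ∧ S i ≤ min i (N - i))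
    (L : ℕ → ℝ) (h0 : L 0 = 1) (hNval : L N = 1)
    (hrec : ∀ i : ℕ, 1 ≤ i → i ≤ N - 1 →
      L i = q * L (i - S i) + p * L (i + S i)) :
    ∀ i : ℕ, i ≤ N → L i ≤ 1 := by
  have hq0 : 0 < q := by rw [hq]; linarith
  have key : ∀ i, i ≤ N → (∀ j, j ≤ N → L j ≤ L i) → L i ≤ 1 := by
    intro i
    induction i using Nat.strong_induction_on with
    | _ i ih =>
      intro hiN hmax
      rcases Nat.eq_zero_or_pos i with hz | h1i
      · rw [hz, h0]
      by_cases hiN' : i = N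
      · rw [hiN', hNval]
      have hi1 : i ≤ N - 1 := by omega
      obtain ⟨hS1, hS2⟩ := hS i h1i hi1
      have hSi : S i ≤ i := le_trans hS2 (min_le_left _ _)
      have hSN : S i ≤ N - i := le_trans hS2 (min_le_right _ _)
      have hsub : i - S i < i := by omega
      have hle1 : i - S i ≤ N := by omega
      have hle2 : i + S i ≤ N := by omega
      have ha := hmax _ hle1
      have hb := hmax _ hle2
      have hr := hrec i h1i hi1
      have heq : L (i - S i) = L i := by
        refine le_antisymm ha ?_
        have hpb : p * L (i + S i) ≤ p * L i := mul_le_mul_of_nonneg_left hb hp0.le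
        have h1 : q * L i ≤ q * L (i - S i) := by rw [hq] at hr ⊢; linarith
        exact le_of_mul_le_mul_left h1 hq0
      calc L i = L (i - S i) := heq.symm
        _ ≤ 1 := ih _ hsub hle1 (fun j hj => heq ▸ hmax j hj)
  obtain ⟨m, hm, hmax⟩ := Finset.exists_max_image (Finset.range (N + 1)) L
    ⟨0, by simp⟩
  have hmle : L m ≤ 1 := key m (by simpa using Nat.lt_succ_iff.mp (Finset.mem_range.mp hm))
    (fun j hj => hmax j (Finset.mem_range.mpr (Nat.lt_succ_of_le hj)))
  intro i hi
  exact le_trans (hmax i (Finset.mem_range.mpr (Nat.lt_succ_of_le hi))) hmle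

/-- Evaluation at `t = 1` of the duration-PGF system: any solution of
`L 0 = 1`, `L N = 1`, `L i = q·L(i - S i) + p·L(i + S i)` for `1 ≤ i ≤ N - 1`
is identically `1` on `{0,…,N}` — i.e. under any stationary strategy the game
ends with probability one. -/
theorem duration_pgf_at_one_is_one
    (N : ℕ) (hN : 2 ≤ N) (p q : ℝ)
    (hp0 : 0 < p) (hp1 : p < 1) (hq : q = 1 - p)
    (S : ℕ → ℕ)
    (hS : ∀ i : ℕ, 1 ≤ i → i ≤ N - 1 → 1 ≤ S i ∧ S i ≤ min i (N - i))
    (L : ℕ → ℝ) (h0 : L 0 = 1) (hNval : L N = 1)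
    (hrec : ∀ i : ℕ, 1 ≤ i → i ≤ N - 1 →
      L i = q * L (i - S i) + p * L (i + S i)) :
    ∀ i : ℕ, i ≤ N → L i = 1 := by
  have hle := duration_pgf_aux N hN p q hp0 hp1 hq S hS L h0 hNval hrec
  have hge := duration_pgf_aux N hN p q hp0 hp1 hq S hS (fun i => 2 - L i)
    (by simp [h0]; norm_num) (by simp [hNval]; norm_num)
    (by intro i h1 h2
        have := hrec i h1 h2
        rw [hq] at this
        simp only [hq]
        ring_nf
        linarith)
  intro i hi
  have h1 := hle i hi
  have h2 := hge i hi
  have h2 : 2 - L i ≤ 1 := h2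
  linarith
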